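/- arXiv:2505.22257 — 2 statements merged into one kernel-verified Lean document; each statement's English description precedes it below -/
import Mathlib

section
/- Let (Y, 𝒴) be a measurable space, r : Y → ℝ a measurable reward with 0 ≤ r(y) ≤ 1 for all y, and let 0 < ε ≤ 3/4. For probability measures π, π_k, α on Y, the following policy-improvement lower bound holds: J(π) − J(π_k) ≥ L_α(π) − 2·((1 − σ_{α,ε})/σ_{α,ε})·TV(π, α) − 2·TV(π_k, α). -/
open MeasureTheory

/-- Expected reward `J(m) = ∫ r dm`. -/
noncomputable def J {Y : Type*} [MeasurableSpace Y] (r : Y → ℝ) (m : Measure Y) : ℝ :=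
  ∫ y, r y ∂m

/-- Variance `σ_m² = ∫ (r − μ_m)² dm` with `μ_m = J(m)`. -/
noncomputable def rvar {Y : Type*} [MeasurableSpace Y] (r : Y → ℝ) (m : Measure Y) : ℝ :=
  ∫ y, (r y - J r m) ^ 2 ∂m

/-- Regularized standard deviation `σ_{m,ε} = sqrt(σ_m² + ε)`. -/
noncomputable def sigmaEps {Y : Type*} [MeasurableSpace Y] (r : Y → ℝ) (m : Measure Y)
    (ε : ℝ) : ℝ :=
  Real.sqrt (rvar r m + ε)

/-- Off-policy advantage objective `L_α(π) = (J(π) − μ_α)/σ_{α,ε}`. -/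
noncomputable def Ladv {Y : Type*} [MeasurableSpace Y] (r : Y → ℝ) (α π : Measure Y)
    (ε : ℝ) : ℝ :=
  (J r π - J r α) / sigmaEps r α ε

/-- Total variation distance `TV(m₁,m₂) = sup_{A measurable} |m₁(A) − m₂(A)|`. -/
noncomputable def tvDist {Y : Type*} [MeasurableSpace Y] (m₁ m₂ : Measure Y) : ℝ :=
  ⨆ A : {s : Set Y // MeasurableSet s}, |(m₁ A.1).toReal - (m₂ A.1).toReal|

section Aux

variable {Y : Type*} [MeasurableSpace Y]

lemma prob_toReal_le_one (m : Measure Y) [IsProbabilityMeasure m] (A : Set Y) :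
    (m A).toReal ≤ 1 := by
  have h : m A ≤ 1 := prob_le_one
  have := ENNReal.toReal_mono (by simp) h
  simpa using this

lemma tvDist_bddAbove (m₁ m₂ : Measure Y) [IsProbabilityMeasure m₁] [IsProbabilityMeasure m₂] :
    BddAbove (Set.range fun A : {s : Set Y // MeasurableSet s} =>
      |(m₁ A.1).toReal - (m₂ A.1).toReal|) := by
  refine ⟨1, ?_⟩
  rintro x ⟨A, rfl⟩
  have h1 := prob_toReal_le_one m₁ A.1
  have h2 := prob_toReal_le_one m₂ A.1
  have h3 : 0 ≤ (m₁ A.1).toReal := ENNReal.toReal_nonneg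
  have h4 : 0 ≤ (m₂ A.1).toReal := ENNReal.toReal_nonneg
  rw [abs_sub_le_iff]
  constructor <;> linarith

lemma le_tvDist (m₁ m₂ : Measure Y) [IsProbabilityMeasure m₁] [IsProbabilityMeasure m₂]
    {A : Set Y} (hA : MeasurableSet A) :
    |(m₁ A).toReal - (m₂ A).toReal| ≤ tvDist m₁ m₂ :=
  le_ciSup (tvDist_bddAbove m₁ m₂) (⟨A, hA⟩ : {s : Set Y // MeasurableSet s})

lemma tvDist_nonneg (m₁ m₂ : Measure Y) [IsProbabilityMeasure m₁] [IsProbabilityMeasure m₂] :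
    0 ≤ tvDist m₁ m₂ := by
  have := le_tvDist m₁ m₂ MeasurableSet.empty
  simpa using this

lemma integrable_of_bdd {f : Y → ℝ} (hf : Measurable f) (C : ℝ) (hb : ∀ y, ‖f y‖ ≤ C)
    (m : Measure Y) [IsFiniteMeasure m] : Integrable f m :=
  Integrable.mono' (integrable_const C) hf.aestronglyMeasurable (Filter.Eventually.of_forall hb)

lemma abs_J_sub_le (r : Y → ℝ) (hr_meas : Measurable r) (hr : ∀ y, 0 ≤ r y ∧ r y ≤ 1)
    (m₁ m₂ : Measure Y) [IsProbabilityMeasure m₁] [IsProbabilityMeasure m₂] :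
    |J r m₁ - J r m₂| ≤ tvDist m₁ m₂ := by
  have hint₁ : Integrable r m₁ := integrable_of_bdd hr_meas 1
    (fun y => by rw [Real.norm_eq_abs, abs_le]; exact ⟨by linarith [(hr y).1], (hr y).2⟩) m₁
  have hint₂ : Integrable r m₂ := integrable_of_bdd hr_meas 1
    (fun y => by rw [Real.norm_eq_abs, abs_le]; exact ⟨by linarith [(hr y).1], (hr y).2⟩) m₂
  set f : ℝ → ℝ := fun t => (m₁ {a | t < r a}).toReal with hf
  set g : ℝ → ℝ := fun t => (m₂ {a | t < r a}).toReal with hg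
  have hAt : ∀ t : ℝ, MeasurableSet {a | t < r a} :=
    fun t => measurableSet_lt measurable_const hr_meas
  have hfm : Measurable f := Measurable.ennreal_toReal
    (Antitone.measurable (fun s t hst => measure_mono (fun a h => lt_of_le_of_lt hst h)))
  have hgm : Measurable g := Measurable.ennreal_toReal
    (Antitone.measurable (fun s t hst => measure_mono (fun a h => lt_of_le_of_lt hst h)))
  have hempty : ∀ t : ℝ, 1 < t → {a | t < r a} = (∅ : Set Y) := by
    intro t ht
    ext a
    simp only [Set.mem_setOf_eq, Set.mem_empty_iff_false, iff_false, not_lt]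
    linarith [(hr a).2]
  have hf01 : ∀ t, 0 ≤ f t ∧ f t ≤ 1 := fun t => ⟨ENNReal.toReal_nonneg, prob_toReal_le_one m₁ _⟩
  have hg01 : ∀ t, 0 ≤ g t ∧ g t ≤ 1 := fun t => ⟨ENNReal.toReal_nonneg, prob_toReal_le_one m₂ _⟩
  -- integrability of f and g on Ioi 0
  have hIndInt : Integrable ((Set.Ioc (0:ℝ) 1).indicator (fun _ => (1:ℝ)))
      (volume.restrict (Set.Ioi (0:ℝ))) := by
    rw [integrable_indicator_iff measurableSet_Ioc]
    refine integrableOn_const (ne_of_lt ?_) (by simp)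
    rw [Measure.restrict_apply measurableSet_Ioc]
    exact (measure_mono Set.inter_subset_left).trans_lt (by simp)
  have hbound : ∀ (h : ℝ → ℝ), (∀ t, 0 ≤ h t ∧ h t ≤ 1) → (∀ t, 1 < t → h t = 0) →
      ∀ t ∈ Set.Ioi (0:ℝ), ‖h t‖ ≤ (Set.Ioc (0:ℝ) 1).indicator (fun _ => (1:ℝ)) t := by
    intro h h01 hz t ht
    rw [Real.norm_eq_abs, abs_of_nonneg (h01 t).1]
    by_cases h1 : t ≤ 1
    · rw [Set.indicator_of_mem (Set.mem_Ioc.mpr ⟨Set.mem_Ioi.mp ht, h1⟩)]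
      exact (h01 t).2
    · rw [Set.indicator_of_notMem (fun hc => h1 hc.2), hz t (not_le.1 h1)]
  have hfz : ∀ t, 1 < t → f t = 0 := fun t ht => by simp [hf, hempty t ht]
  have hgz : ∀ t, 1 < t → g t = 0 := fun t ht => by simp [hg, hempty t ht]
  have hfi : Integrable f (volume.restrict (Set.Ioi (0:ℝ))) :=
    Integrable.mono' hIndInt hfm.aestronglyMeasurable
      ((ae_restrict_iff' measurableSet_Ioi).2
        (Filter.Eventually.of_forall (fun t ht => hbound f hf01 hfz t ht)))
  have hgi : Integrable g (volume.restrict (Set.Ioi (0:ℝ))) :=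
    Integrable.mono' hIndInt hgm.aestronglyMeasurable
      ((ae_restrict_iff' measurableSet_Ioi).2
        (Filter.Eventually.of_forall (fun t ht => hbound g hg01 hgz t ht)))
  -- layer cake
  have hl₁ : J r m₁ = ∫ t in Set.Ioi (0:ℝ), f t :=
    hint₁.integral_eq_integral_meas_lt (Filter.Eventually.of_forall (fun y => (hr y).1))
  have hl₂ : J r m₂ = ∫ t in Set.Ioi (0:ℝ), g t :=
    hint₂.integral_eq_integral_meas_lt (Filter.Eventually.of_forall (fun y => (hr y).1))
  have hsub : J r m₁ - J r m₂ = ∫ t in Set.Ioi (0:ℝ), (f t - g t) := by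
    rw [hl₁, hl₂, integral_sub hfi hgi]
  rw [hsub]
  have hIndTV : Integrable ((Set.Ioc (0:ℝ) 1).indicator (fun _ => tvDist m₁ m₂))
      (volume.restrict (Set.Ioi (0:ℝ))) := by
    rw [integrable_indicator_iff measurableSet_Ioc]
    refine integrableOn_const (ne_of_lt ?_) (by simp)
    rw [Measure.restrict_apply measurableSet_Ioc]
    exact (measure_mono Set.inter_subset_left).trans_lt (by simp)
  have hnorm : ‖∫ t in Set.Ioi (0:ℝ), (f t - g t)‖ ≤
      ∫ t in Set.Ioi (0:ℝ), (Set.Ioc (0:ℝ) 1).indicator (fun _ => tvDist m₁ m₂) t := by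
    refine norm_integral_le_of_norm_le hIndTV ?_
    refine (ae_restrict_iff' measurableSet_Ioi).2 (Filter.Eventually.of_forall ?_)
    intro t ht
    rw [Real.norm_eq_abs]
    by_cases h1 : t ≤ 1
    · rw [Set.indicator_of_mem (Set.mem_Ioc.mpr ⟨Set.mem_Ioi.mp ht, h1⟩)]
      exact le_tvDist m₁ m₂ (hAt t)
    · rw [Set.indicator_of_notMem (fun hc => h1 hc.2), hfz t (not_le.1 h1),
        hgz t (not_le.1 h1)]
      simp
  have hcalc : ∫ t in Set.Ioi (0:ℝ), (Set.Ioc (0:ℝ) 1).indicator (fun _ => tvDist m₁ m₂) t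
      = tvDist m₁ m₂ := by
    rw [integral_indicator_const _ measurableSet_Ioc, Measure.real,
      Measure.restrict_apply measurableSet_Ioc,
      Set.inter_eq_self_of_subset_left Set.Ioc_subset_Ioi_self]
    simp
  calc |∫ t in Set.Ioi (0:ℝ), (f t - g t)| = ‖∫ t in Set.Ioi (0:ℝ), (f t - g t)‖ :=
        (Real.norm_eq_abs _).symm
    _ ≤ _ := hnorm
    _ = tvDist m₁ m₂ := hcalc

end Aux

/-- Off-policy GRPO policy-improvement lower bound. -/
theorem offpolicy_improvement {Y : Type*} [MeasurableSpace Y]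
    (r : Y → ℝ) (hr_meas : Measurable r) (hr : ∀ y, 0 ≤ r y ∧ r y ≤ 1)
    (ε : ℝ) (hε : 0 < ε) (hε' : ε ≤ 3 / 4)
    (π πk α : Measure Y)
    [IsProbabilityMeasure π] [IsProbabilityMeasure πk] [IsProbabilityMeasure α] :
    J r π - J r πk ≥
      Ladv r α π ε
        - 2 * ((1 - sigmaEps r α ε) / sigmaEps r α ε) * tvDist π α
        - 2 * tvDist πk α := by
  have hnorm1 : ∀ y, ‖r y‖ ≤ 1 := fun y => by
    rw [Real.norm_eq_abs, abs_le]; exact ⟨by linarith [(hr y).1], (hr y).2⟩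
  have hintα : Integrable r α := integrable_of_bdd hr_meas 1 hnorm1 α
  have h1 : Integrable (fun y => (r y) ^ 2) α := by
    refine integrable_of_bdd (hr_meas.pow_const 2) 1 (fun y => ?_) α
    rw [Real.norm_eq_abs, abs_le]
    constructor <;> nlinarith [(hr y).1, (hr y).2]
  have h2 : Integrable (fun y => (2 * J r α) * r y) α := hintα.const_mul _
  have hμ0 : 0 ≤ J r α := integral_nonneg (fun y => (hr y).1)
  have hμ1 : J r α ≤ 1 := by
    have : ∫ y, r y ∂α ≤ ∫ _, (1:ℝ) ∂α := integral_mono hintα (integrable_const 1)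
      (fun y => (hr y).2)
    simpa [J] using this
  have expand : rvar r α = (∫ y, (r y) ^ 2 ∂α) - (J r α) ^ 2 := by
    have h3 : Integrable (fun y => (r y) ^ 2 - (2 * J r α) * r y) α := h1.sub h2
    calc rvar r α = ∫ y, ((r y) ^ 2 - (2 * J r α) * r y + (J r α) ^ 2) ∂α := by
          unfold rvar; congr 1; funext y; ring
      _ = (∫ y, ((r y) ^ 2 - (2 * J r α) * r y) ∂α) + (J r α) ^ 2 := by
          rw [integral_add h3 (integrable_const _), integral_const]; simp
      _ = (∫ y, (r y) ^ 2 ∂α) - (2 * J r α) * (∫ y, r y ∂α) + (J r α) ^ 2 := by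
          rw [integral_sub h1 h2, integral_const_mul]
      _ = (∫ y, (r y) ^ 2 ∂α) - (J r α) ^ 2 := by unfold J; ring
  have hr2le : ∫ y, (r y) ^ 2 ∂α ≤ ∫ y, r y ∂α :=
    integral_mono h1 hintα (fun y => by nlinarith [(hr y).1, (hr y).2])
  have hJeq : (∫ y, r y ∂α) = J r α := rfl
  have hvar_nonneg : 0 ≤ rvar r α := integral_nonneg (fun y => sq_nonneg _)
  have hvar_le : rvar r α ≤ 1 / 4 := by
    rw [expand]
    rw [hJeq] at hr2le
    nlinarith [sq_nonneg (J r α - 1 / 2)]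
  set σ := sigmaEps r α ε with hσdef
  have hσpos : 0 < σ := Real.sqrt_pos.2 (by linarith)
  have hσ1 : σ ≤ 1 := by
    rw [hσdef, sigmaEps, show (1:ℝ) = Real.sqrt 1 from Real.sqrt_one.symm]
    exact Real.sqrt_le_sqrt (by linarith)
  have hc : 0 ≤ (1 - σ) / σ := div_nonneg (by linarith) hσpos.le
  set T1 := tvDist π α with hT1def
  set T2 := tvDist πk α with hT2def
  have hT1 : |J r π - J r α| ≤ T1 := abs_J_sub_le r hr_meas hr π α
  have hT2 : |J r πk - J r α| ≤ T2 := abs_J_sub_le r hr_meas hr πk α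
  have hT1n : 0 ≤ T1 := tvDist_nonneg π α
  have hT2n : 0 ≤ T2 := tvDist_nonneg πk α
  set d := J r π - J r α with hddef
  have hdle : d ≤ T1 := le_trans (le_abs_self d) hT1
  have he : d - d / σ = -(((1 - σ) / σ) * d) := by field_simp; ring
  have hm1 : ((1 - σ) / σ) * d ≤ ((1 - σ) / σ) * T1 := mul_le_mul_of_nonneg_left hdle hc
  have hm2 : 0 ≤ ((1 - σ) / σ) * T1 := mul_nonneg hc hT1n
  have hk : J r α - J r πk ≥ -T2 := by
    have := neg_abs_le (J r πk - J r α)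
    have h' := le_trans (le_abs_self (J r πk - J r α)) hT2
    linarith
  rw [Ladv]
  have : (J r π - J r α) / sigmaEps r α ε = d / σ := rfl
  rw [this]
  linarith
end

section
/- Let (Y, 𝒴) be a measurable space, r : Y → ℝ a measurable reward with 0 ≤ r(y) ≤ 1 for all y, and let 0 < ε ≤ 3/4. For probability measures π and π_k on Y, the following on-policy improvement lower bound holds: J(π) − J(π_k) ≥ L_{π_k}(π) − 2·((1 − σ_{π_k,ε})/σ_{π_k,ε})·TV(π, π_k). -/
open MeasureTheory

lemma integrable_of_le_one {Y : Type*} [MeasurableSpace Y] {r : Y → ℝ} (hm : Measurable r)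
    (hr : ∀ y, 0 ≤ r y ∧ r y ≤ 1) (m : Measure Y) [IsFiniteMeasure m] : Integrable r m := by
  refine (integrable_const (1:ℝ)).mono' hm.aestronglyMeasurable ?_
  filter_upwards with y
  rw [Real.norm_eq_abs, abs_of_nonneg (hr y).1]
  exact (hr y).2

lemma tv_bddAbove {Y : Type*} [MeasurableSpace Y] (m₁ m₂ : Measure Y)
    [IsProbabilityMeasure m₁] [IsProbabilityMeasure m₂] :
    BddAbove (Set.range fun A : {s : Set Y // MeasurableSet s} =>
      |(m₁ A.1).toReal - (m₂ A.1).toReal|) := by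
  refine ⟨1, ?_⟩
  rintro x ⟨A, rfl⟩
  have h1 : (m₁ A.1).toReal ≤ 1 := by
    simpa using (ENNReal.toReal_le_toReal (measure_ne_top _ _) ENNReal.one_ne_top).mpr prob_le_one
  have h2 : (m₂ A.1).toReal ≤ 1 := by
    simpa using (ENNReal.toReal_le_toReal (measure_ne_top _ _) ENNReal.one_ne_top).mpr prob_le_one
  have h3 : 0 ≤ (m₁ A.1).toReal := ENNReal.toReal_nonneg
  have h4 : 0 ≤ (m₂ A.1).toReal := ENNReal.toReal_nonneg
  rw [abs_sub_le_iff]; constructor <;> linarith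

lemma tv_nonneg {Y : Type*} [MeasurableSpace Y] (m₁ m₂ : Measure Y)
    [IsProbabilityMeasure m₁] [IsProbabilityMeasure m₂] : 0 ≤ tvDist m₁ m₂ := by
  have := le_ciSup (tv_bddAbove m₁ m₂) ⟨∅, MeasurableSet.empty⟩
  simpa [tvDist] using this

lemma diff_le_tv {Y : Type*} [MeasurableSpace Y] {r : Y → ℝ} (hm : Measurable r)
    (hr : ∀ y, 0 ≤ r y ∧ r y ≤ 1) (π πk : Measure Y)
    [IsProbabilityMeasure π] [IsProbabilityMeasure πk] :
    J r π - J r πk ≤ tvDist π πk := by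
  set lam := π + πk with hlam
  have hπ : π ≪ lam := Measure.AbsolutelyContinuous.rfl.add_right πk
  have hπk : πk ≪ lam := by
    rw [hlam]
    intro s hs
    simp only [Measure.add_apply, add_eq_zero] at hs
    exact hs.2
  set f : Y → ℝ := fun x => (π.rnDeriv lam x).toReal with hf
  set g : Y → ℝ := fun x => (πk.rnDeriv lam x).toReal with hg
  have hfmeas : Measurable f := (Measure.measurable_rnDeriv π lam).ennreal_toReal
  have hgmeas : Measurable g := (Measure.measurable_rnDeriv πk lam).ennreal_toReal
  have hfint : Integrable f lam := Measure.integrable_toReal_rnDeriv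
  have hgint : Integrable g lam := Measure.integrable_toReal_rnDeriv
  have hrπ : Integrable r π := integrable_of_le_one hm hr π
  have hrπk : Integrable r πk := integrable_of_le_one hm hr πk
  have hrfint : Integrable (fun x => f x * r x) lam := by
    simpa [smul_eq_mul] using (integrable_rnDeriv_smul_iff hπ (f := r)).mpr hrπ
  have hrgint : Integrable (fun x => g x * r x) lam := by
    simpa [smul_eq_mul] using (integrable_rnDeriv_smul_iff hπk (f := r)).mpr hrπk
  have hJπ : J r π = ∫ x, f x * r x ∂lam := by
    rw [J]; rw [← integral_rnDeriv_smul hπ (f := r)]; simp [hf, smul_eq_mul]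
  have hJπk : J r πk = ∫ x, g x * r x ∂lam := by
    rw [J]; rw [← integral_rnDeriv_smul hπk (f := r)]; simp [hg, smul_eq_mul]
  set A : Set Y := {x | g x ≤ f x} with hA
  have hAmeas : MeasurableSet A := measurableSet_le hgmeas hfmeas
  have hind : Integrable (A.indicator (fun x => f x - g x)) lam :=
    (hfint.sub hgint).indicator hAmeas
  have key : J r π - J r πk ≤ ∫ x, A.indicator (fun x => f x - g x) x ∂lam := by
    rw [hJπ, hJπk, ← integral_sub hrfint hrgint]
    refine integral_mono (hrfint.sub hrgint) hind ?_
    intro x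
    by_cases hx : x ∈ A
    · have hfg : 0 ≤ f x - g x := by simpa [hA, sub_nonneg] using hx
      simp only [Set.indicator_of_mem hx]
      have : f x * r x - g x * r x = (f x - g x) * r x := by ring
      rw [this]
      calc (f x - g x) * r x ≤ (f x - g x) * 1 := by
            exact mul_le_mul_of_nonneg_left (hr x).2 hfg
        _ = f x - g x := by ring
    · have hfg : f x - g x < 0 := by
        simp only [hA, Set.mem_setOf_eq, not_le] at hx; linarith
      simp only [Set.indicator_of_notMem hx]
      have : f x * r x - g x * r x = (f x - g x) * r x := by ring
      rw [this]
      exact mul_nonpos_of_nonpos_of_nonneg hfg.le (hr x).1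
  have hval : ∫ x, A.indicator (fun x => f x - g x) x ∂lam
      = (π A).toReal - (πk A).toReal := by
    rw [integral_indicator hAmeas,
      integral_sub (hfint.restrict) (hgint.restrict),
      Measure.setIntegral_toReal_rnDeriv hπ A, Measure.setIntegral_toReal_rnDeriv hπk A]
    rfl
  have htv : (π A).toReal - (πk A).toReal ≤ tvDist π πk := by
    have := le_ciSup (tv_bddAbove π πk) ⟨A, hAmeas⟩
    exact le_trans (le_abs_self _) this
  linarith [key, hval.le, hval.ge]

lemma rvar_le_quarter {Y : Type*} [MeasurableSpace Y] {r : Y → ℝ} (hm : Measurable r)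
    (hr : ∀ y, 0 ≤ r y ∧ r y ≤ 1) (m : Measure Y) [IsProbabilityMeasure m] :
    rvar r m ≤ 1 / 4 := by
  set μ := J r m with hμ
  have hrint : Integrable r m := integrable_of_le_one hm hr m
  have hr2int : Integrable (fun y => r y ^ 2) m := by
    refine integrable_of_le_one (hm.pow_const 2) (fun y => ?_) m
    exact ⟨sq_nonneg _, by nlinarith [(hr y).1, (hr y).2]⟩
  have hμ0 : 0 ≤ μ := integral_nonneg fun y => (hr y).1
  have hμ1 : μ ≤ 1 := by
    calc μ ≤ ∫ _, (1:ℝ) ∂m := integral_mono hrint (integrable_const 1) fun y => (hr y).2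
      _ = 1 := by simp
  have hexp : rvar r m = (∫ y, r y ^ 2 ∂m) - μ ^ 2 := by
    rw [rvar, ← hμ]
    have h1 : ∀ y, (r y - μ) ^ 2 = r y ^ 2 - 2 * μ * r y + μ ^ 2 := fun y => by ring
    simp_rw [h1]
    have e1 : Integrable (fun y => r y ^ 2 - 2 * μ * r y) m :=
      hr2int.sub (hrint.const_mul (2 * μ))
    rw [integral_add e1 (integrable_const _),
      integral_sub hr2int (hrint.const_mul (2 * μ)), MeasureTheory.integral_const_mul, integral_const]
    simp [← hμ]
    rw [show (∫ a, r a ∂m) = μ from rfl]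
    ring
  have h2 : (∫ y, r y ^ 2 ∂m) ≤ μ := by
    refine integral_mono hr2int hrint fun y => ?_
    nlinarith [(hr y).1, (hr y).2]
  rw [hexp]; nlinarith [sq_nonneg (μ - 1/2)]

/-- On-policy GRPO policy-improvement lower bound. -/
theorem onpolicy_improvement {Y : Type*} [MeasurableSpace Y]
    (r : Y → ℝ) (hr_meas : Measurable r) (hr : ∀ y, 0 ≤ r y ∧ r y ≤ 1)
    (ε : ℝ) (hε : 0 < ε) (hε' : ε ≤ 3 / 4)
    (π πk : Measure Y)
    [IsProbabilityMeasure π] [IsProbabilityMeasure πk] :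
    J r π - J r πk ≥
      Ladv r πk π ε
        - 2 * ((1 - sigmaEps r πk ε) / sigmaEps r πk ε) * tvDist π πk := by
  set σ := sigmaEps r πk ε with hσdef
  set D := J r π - J r πk with hD
  set tv := tvDist π πk with htv
  have hrv0 : 0 ≤ rvar r πk := integral_nonneg fun y => sq_nonneg _
  have hσpos : 0 < σ := Real.sqrt_pos.mpr (by linarith)
  have hσ1 : σ ≤ 1 := by
    rw [hσdef, sigmaEps, show (1:ℝ) = Real.sqrt 1 by simp]
    exact Real.sqrt_le_sqrt (by linarith [rvar_le_quarter hr_meas hr πk])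
  have hDtv : D ≤ tv := diff_le_tv hr_meas hr π πk
  have htv0 : 0 ≤ tv := tv_nonneg π πk
  have hL : Ladv r πk π ε = D / σ := rfl
  rw [hL, ge_iff_le]
  have heq : D / σ - 2 * ((1 - σ) / σ) * tv = (D - 2 * (1 - σ) * tv) / σ := by
    field_simp
  rw [heq, div_le_iff₀ hσpos]
  nlinarith
end
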